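/- arXiv:1604.01057 — 2 statements merged into one kernel-verified Lean document; each statement's English description precedes it below -/
import Mathlib

section
/- Let $F$ be a totally real number field of degree $n$ with integral basis $\alpha_1, \dots, \alpha_n$, let $E/F$ be a CM extension, and let $\Phi = \{\sigma_1, \dots, \sigma_n\}$ be a CM type for $E$. Then the compositum of the reflex field $E_\Phi$ with the Galois closure $F^s$ of $F$ equals the compositum $E^{\sigma_1}\cdots E^{\sigma_n}$, which in turn equals the Galois closure $E^s$ of $E$. -/
open Pointwise

/-- The action of the Galois group `Gal(K/ℚ)` on embeddings `E ↪ K` by postcomposition. -/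
noncomputable instance galActionOnEmbeddings (K E' : Type*) [Field K] [Field E']
    [Algebra ℚ K] [Algebra ℚ E'] : MulAction (K ≃ₐ[ℚ] K) (E' →ₐ[ℚ] K) where
  smul σ f := σ.toAlgHom.comp f
  one_smul f := by ext x; rfl
  mul_smul a b f := by ext x; rfl

noncomputable instance (K E' : Type*) [Field K] [Field E'] [Algebra ℚ K] [Algebra ℚ E'] :
    DecidableEq (E' →ₐ[ℚ] K) := Classical.decEq _

set_option maxHeartbeats 2000000 in
set_option synthInstance.maxHeartbeats 400000 in
/-- Let `F` be a totally real field of degree `n`, `E/F` a CM extension (with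
complex conjugation `c`, a central involution of the Galois closure `K = E^s` whose fixed
subfield of `E` is exactly `F`), and `Φ = {σ₁, …, σₙ}` a CM type for `E`.  Then the compositum
of the reflex field `E_Φ` (the fixed field of the stabilizer of `Φ` in `Gal(E^s/ℚ)`) with the
Galois closure `F^s` of `F` equals the compositum `E^{σ₁} ⋯ E^{σₙ}` of the images of the
embeddings in `Φ`, which in turn equals the Galois closure `E^s` of `E`. -/
theorem reflex_compositum_eq_conjugate_compositum
    {K : Type*} [Field K] [NumberField K] [IsGalois ℚ K]
    (E F : IntermediateField ℚ K) (hFE : F ≤ E)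
    (hns : IntermediateField.normalClosure ℚ E K = ⊤)
    (n : ℕ) (hn : 1 ≤ n) (hdegF : Module.finrank ℚ F = n)
    (hdegE : Module.finrank ℚ E = 2 * n)
    (hF : ∀ φ : F →+* ℂ, ∀ x : F, (φ x).im = 0)
    (c : K ≃ₐ[ℚ] K) (hc : ∀ x, c (c x) = x)
    (hcentral : ∀ σ : K ≃ₐ[ℚ] K, c * σ = σ * c)
    (hfix : ∀ x : K, x ∈ E → (c x = x ↔ x ∈ F))
    (Φ : Finset (E →ₐ[ℚ] K))
    (hΦ : ∀ φ : E →ₐ[ℚ] K, φ ∈ Φ ↔ c.toAlgHom.comp φ ∉ Φ) :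
    IntermediateField.fixedField (MulAction.stabilizer (K ≃ₐ[ℚ] K) Φ) ⊔
        IntermediateField.normalClosure ℚ F K = (⨆ φ ∈ Φ, φ.fieldRange) ∧
    (⨆ φ ∈ Φ, (φ : E →ₐ[ℚ] K).fieldRange) = IntermediateField.normalClosure ℚ E K := by
  classical
  have smul_def : ∀ (σ : K ≃ₐ[ℚ] K) (φ : E →ₐ[ℚ] K), σ • φ = σ.toAlgHom.comp φ :=
    fun _ _ => rfl
  have hcF : ∀ x : K, x ∈ F → c x = x := fun x hx => (hfix x (hFE hx)).mpr hx
  have hcomm : ∀ (σ : K ≃ₐ[ℚ] K) (x : K), c (σ x) = σ (c x) := by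
    intro σ x
    have h := congrArg (fun f : K ≃ₐ[ℚ] K => f x) (hcentral σ)
    simpa [AlgEquiv.mul_apply] using h
  -- every embedding of an intermediate field lifts to an automorphism of `K`
  have lift : ∀ (L : IntermediateField ℚ K) (f : L →ₐ[ℚ] K),
      ∃ τ : K ≃ₐ[ℚ] K, ∀ x : L, τ x = f x := by
    intro L f
    have hbij : Function.Bijective (f.liftNormal K) :=
      AlgHom.normal_bijective ℚ K K (f.liftNormal K)
    refine ⟨AlgEquiv.ofBijective (f.liftNormal K) hbij, fun x => ?_⟩
    have h := f.liftNormal_commutes K x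
    simpa using h
  -- helpers about fixed fields
  have le_fixed : ∀ (σ : K ≃ₐ[ℚ] K) (L : IntermediateField ℚ K),
      (∀ x ∈ L, σ x = x) → L ≤ IntermediateField.fixedField (Subgroup.zpowers σ) := by
    intro σ L h
    rw [IntermediateField.le_iff_le, Subgroup.zpowers_le,
      IntermediateField.mem_fixingSubgroup_iff]
    exact h
  have mem_fixed_out : ∀ (σ : K ≃ₐ[ℚ] K) (x : K),
      x ∈ IntermediateField.fixedField (Subgroup.zpowers σ) → σ x = x := by
    intro σ x hx
    exact hx ⟨σ, Subgroup.mem_zpowers σ⟩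
  -- `c` fixes the Galois closure of `F` pointwise
  have hcFs : ∀ x ∈ IntermediateField.normalClosure ℚ F K, c x = x := by
    have h1 : IntermediateField.normalClosure ℚ F K ≤
        IntermediateField.fixedField (Subgroup.zpowers c) := by
      rw [normalClosure_le_iff]
      intro f
      have hfix' : ∀ y ∈ f.fieldRange, c y = y := by
        rintro y ⟨x, rfl⟩
        obtain ⟨τ, hτ⟩ := lift F f
        show c (f x) = f x
        rw [← hτ x, hcomm τ]
        congr 1
        exact hcF _ x.2
      exact le_trans (le_of_eq rfl) (le_fixed c f.fieldRange hfix')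
    exact fun x hx => mem_fixed_out c x (h1 hx)
  -- an automorphism fixing all embeddings of `E` is trivial
  have fix_all : ∀ σ : K ≃ₐ[ℚ] K,
      (∀ φ : E →ₐ[ℚ] K, σ.toAlgHom.comp φ = φ) → σ = 1 := by
    intro σ h
    have htop : (⊤ : IntermediateField ℚ K) ≤
        IntermediateField.fixedField (Subgroup.zpowers σ) := by
      rw [← hns, normalClosure_le_iff]
      intro f
      apply le_fixed
      rintro y ⟨x, rfl⟩
      exact congrArg (fun g : E →ₐ[ℚ] K => g x) (h f)
    ext x
    exact mem_fixed_out σ x (htop trivial)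
  -- set up the quadratic extension E/F
  letI : Algebra F E := (IntermediateField.inclusion hFE).toRingHom.toAlgebra
  haveI : IsScalarTower ℚ F E := IsScalarTower.of_algebraMap_eq (by
    intro q
    apply Subtype.ext
    simp [RingHom.algebraMap_toAlgebra, IntermediateField.coe_inclusion])
  letI : Module F E := Algebra.toModule
  haveI : FiniteDimensional F E := Module.Finite.right ℚ F E
  have hrank : Module.finrank F E = 2 := by
    have h := Module.finrank_mul_finrank ℚ F E
    rw [hdegF, hdegE] at h
    have hn' : 0 < n := hn
    nlinarith [h]
  obtain ⟨α, hα⟩ := Field.exists_primitive_element F E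
  have hint : IsIntegral F α := IsIntegral.of_finite F α
  have hdeg2 : (minpoly F α).natDegree = 2 := by
    have h1 := IntermediateField.adjoin.finrank hint
    rw [hα, IntermediateField.finrank_top'] at h1
    rw [← h1, hrank]
  -- two ℚ-embeddings of E agreeing on F and at α are equal
  have ext2 : ∀ φ ψ : E →ₐ[ℚ] K,
      (∀ x : F, ψ (IntermediateField.inclusion hFE x) = φ (IntermediateField.inclusion hFE x)) →
      ψ α = φ α → ψ = φ := by
    intro φ ψ hF' hα'
    apply AlgHom.ext
    intro x
    have hx : x ∈ IntermediateField.adjoin F ({α} : Set E) := hα.ge trivial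
    induction hx using IntermediateField.adjoin_induction with
    | mem y hy =>
      rcases Set.mem_singleton_iff.mp hy with rfl
      exact hα'
    | algebraMap y => exact hF' y
    | add y z hy hz hy' hz' => rw [map_add, map_add, hy', hz']
    | inv y hy hy' => rw [map_inv₀, map_inv₀, hy']
    | mul y z hy hz hy' hz' => rw [map_mul, map_mul, hy', hz']
  -- the key dichotomy
  have keyA : ∀ σ : K ≃ₐ[ℚ] K, (∀ x ∈ IntermediateField.normalClosure ℚ F K, σ x = x) →
      ∀ φ : E →ₐ[ℚ] K,
        σ.toAlgHom.comp φ = φ ∨ σ.toAlgHom.comp φ = c.toAlgHom.comp φ := by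
    intro σ hσ φ
    obtain ⟨τ, hτ⟩ := lift E φ
    have hcφ : ∀ x : F, c (φ (IntermediateField.inclusion hFE x)) =
        φ (IntermediateField.inclusion hFE x) := by
      intro x
      rw [← hτ, hcomm τ]
      congr 1
      apply hcF
      rw [IntermediateField.coe_inclusion]
      exact x.2
    have hσφ : ∀ x : F, σ (φ (IntermediateField.inclusion hFE x)) =
        φ (IntermediateField.inclusion hFE x) := by
      intro x
      exact hσ _ (AlgHom.fieldRange_le_normalClosure
        (φ.comp (IntermediateField.inclusion hFE)) ⟨x, rfl⟩)
    set p := minpoly F α with hp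
    set ρ : F →+* K := (φ.comp (IntermediateField.inclusion hFE)).toRingHom with hρ
    set q := p.map ρ with hq
    have hroot : ∀ ψ : E →ₐ[ℚ] K,
        (∀ x : F, ψ (IntermediateField.inclusion hFE x) =
          φ (IntermediateField.inclusion hFE x)) → q.eval (ψ α) = 0 := by
      intro ψ hψ
      rw [hq, Polynomial.eval_map]
      have hcongr : ρ = ψ.toRingHom.comp (algebraMap F E) := by
        ext x
        exact (hψ x).symm
      rw [hcongr]
      have h1 : Polynomial.eval₂ (ψ.toRingHom.comp (algebraMap F E)) (ψ α) p
          = ψ (Polynomial.eval₂ (algebraMap F E) α p) :=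
        (Polynomial.hom_eval₂ p (algebraMap F E) ψ.toRingHom α).symm
      rw [h1]
      have h0 : Polynomial.eval₂ (algebraMap F E) α p = 0 := minpoly.aeval F α
      rw [h0, map_zero]
    have hrootφ : q.eval (φ α) = 0 := hroot φ (fun _ => rfl)
    have hrootc : q.eval (c (φ α)) = 0 := by
      have := hroot (c.toAlgHom.comp φ) (fun x => hcφ x)
      simpa using this
    have hrootσ : q.eval (σ (φ α)) = 0 := by
      have := hroot (σ.toAlgHom.comp φ) (fun x => hσφ x)
      simpa using this
    have hne : c (φ α) ≠ φ α := by
      intro h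
      have heq : c.toAlgHom.comp φ = φ :=
        ext2 φ (c.toAlgHom.comp φ) (fun x => hcφ x) (by simpa using h)
      exact iff_not_self (heq ▸ hΦ φ)
    have hq0 : q ≠ 0 := Polynomial.map_ne_zero (minpoly.ne_zero hint)
    have hqdeg : q.natDegree = 2 := by
      rw [hq, Polynomial.natDegree_map]
      exact hdeg2
    have hmem : ∀ y : K, q.eval y = 0 → y ∈ q.roots.toFinset := by
      intro y hy
      rw [Multiset.mem_toFinset, Polynomial.mem_roots hq0]
      exact hy
    have hcard : q.roots.toFinset.card ≤ 2 := by
      refine le_trans (Multiset.toFinset_card_le _) ?_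
      refine le_trans (Polynomial.card_roots' q) ?_
      rw [hqdeg]
    have hval : σ (φ α) = φ α ∨ σ (φ α) = c (φ α) := by
      by_contra hcon
      push_neg at hcon
      obtain ⟨h1, h2⟩ := hcon
      have hsub : ({φ α, c (φ α), σ (φ α)} : Finset K) ⊆ q.roots.toFinset := by
        intro y hy
        simp only [Finset.mem_insert, Finset.mem_singleton] at hy
        rcases hy with rfl | rfl | rfl
        · exact hmem _ hrootφ
        · exact hmem _ hrootc
        · exact hmem _ hrootσ
      have hcard3 : ({φ α, c (φ α), σ (φ α)} : Finset K).card = 3 := by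
        rw [Finset.card_insert_of_notMem, Finset.card_insert_of_notMem,
          Finset.card_singleton]
        · simp only [Finset.mem_singleton]
          exact fun h => h2 h.symm
        · simp only [Finset.mem_insert, Finset.mem_singleton]
          push_neg
          exact ⟨fun h => hne h.symm, fun h => h1 h.symm⟩
      have := Finset.card_le_card hsub
      omega
    rcases hval with h | h
    · left
      exact ext2 φ (σ.toAlgHom.comp φ) (fun x => hσφ x) (by simpa using h)
    · right
      refine ext2 (c.toAlgHom.comp φ) (σ.toAlgHom.comp φ) (fun x => ?_) (by simpa using h)
      simp only [AlgHom.coe_comp, AlgEquiv.toAlgHom_eq_coe, AlgHom.coe_coe,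
        Function.comp_apply]
      exact (hσφ x).trans (hcφ x).symm
    -- end keyA
  -- an automorphism fixing all embeddings in Φ fixes all embeddings
  have step : ∀ σ : K ≃ₐ[ℚ] K, (∀ φ ∈ Φ, σ.toAlgHom.comp φ = φ) → σ = 1 := by
    intro σ h
    apply fix_all
    intro ψ
    by_cases hψ : ψ ∈ Φ
    · exact h ψ hψ
    · have hcψ : c.toAlgHom.comp ψ ∈ Φ := by
        by_contra hcc
        exact hψ ((hΦ ψ).mpr hcc)
      have h1 := h _ hcψ
      apply AlgHom.ext
      intro x
      have h2 := congrArg (fun f : E →ₐ[ℚ] K => f x) h1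
      simp only [AlgHom.coe_comp, AlgEquiv.toAlgHom_eq_coe, AlgHom.coe_coe,
        Function.comp_apply] at h2 ⊢
      -- h2 : σ (c (ψ x)) = c (ψ x)
      have h3 : c (σ (ψ x)) = c (ψ x) := by
        rw [hcomm σ (ψ x)]
        exact h2
      have h4 := congrArg c h3
      rw [hc, hc] at h4
      exact h4
  have fixedField_bot :
      IntermediateField.fixedField (⊥ : Subgroup (K ≃ₐ[ℚ] K)) = ⊤ := by
    rw [eq_top_iff]
    rintro x -
    rintro ⟨g, hg⟩
    rw [Subgroup.mem_bot] at hg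
    subst hg
    rfl
  haveI : FiniteDimensional ℚ K := inferInstance
  -- Part 2
  have part2 : (⨆ φ ∈ Φ, (φ : E →ₐ[ℚ] K).fieldRange) = ⊤ := by
    have hsub : IntermediateField.fixingSubgroup
        (⨆ φ ∈ Φ, (φ : E →ₐ[ℚ] K).fieldRange) = ⊥ := by
      rw [eq_bot_iff]
      intro σ hσ
      rw [Subgroup.mem_bot]
      have hσ' := (IntermediateField.mem_fixingSubgroup_iff _ σ).mp hσ
      apply step σ
      intro φ hφ
      apply AlgHom.ext
      intro x
      have hmem : φ x ∈ (⨆ φ ∈ Φ, (φ : E →ₐ[ℚ] K).fieldRange :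
          IntermediateField ℚ K) := by
        have hle : φ.fieldRange ≤ ⨆ φ ∈ Φ, (φ : E →ₐ[ℚ] K).fieldRange :=
          le_iSup₂ (f := fun (φ : E →ₐ[ℚ] K) (_ : φ ∈ Φ) => φ.fieldRange) φ hφ
        exact hle ⟨x, rfl⟩
      exact hσ' _ hmem
    calc (⨆ φ ∈ Φ, (φ : E →ₐ[ℚ] K).fieldRange)
        = IntermediateField.fixedField (IntermediateField.fixingSubgroup
            (⨆ φ ∈ Φ, (φ : E →ₐ[ℚ] K).fieldRange)) :=
          (IsGalois.fixedField_fixingSubgroup _).symm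
      _ = IntermediateField.fixedField (⊥ : Subgroup (K ≃ₐ[ℚ] K)) := by rw [hsub]
      _ = ⊤ := fixedField_bot
  -- Part 1
  have part1 : IntermediateField.fixedField (MulAction.stabilizer (K ≃ₐ[ℚ] K) Φ) ⊔
      IntermediateField.normalClosure ℚ F K = ⊤ := by
    set S := IntermediateField.fixedField (MulAction.stabilizer (K ≃ₐ[ℚ] K) Φ) ⊔
      IntermediateField.normalClosure ℚ F K with hS
    have hsub : IntermediateField.fixingSubgroup S = ⊥ := by
      rw [eq_bot_iff]
      intro σ hσ
      rw [Subgroup.mem_bot]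
      have hσ' := (IntermediateField.mem_fixingSubgroup_iff _ σ).mp hσ
      have h1 : σ ∈ MulAction.stabilizer (K ≃ₐ[ℚ] K) Φ := by
        have hmem : σ ∈ IntermediateField.fixingSubgroup
            (IntermediateField.fixedField (MulAction.stabilizer (K ≃ₐ[ℚ] K) Φ)) := by
          rw [IntermediateField.mem_fixingSubgroup_iff]
          intro x hx
          exact hσ' x (le_sup_left (α := IntermediateField ℚ K)
            (a := IntermediateField.fixedField (MulAction.stabilizer (K ≃ₐ[ℚ] K) Φ))
            (b := IntermediateField.normalClosure ℚ F K) hx)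
        rwa [IntermediateField.fixingSubgroup_fixedField] at hmem
      have h2 : ∀ x ∈ IntermediateField.normalClosure ℚ F K, σ x = x := fun x hx =>
        hσ' x (le_sup_right (α := IntermediateField ℚ K)
          (a := IntermediateField.fixedField (MulAction.stabilizer (K ≃ₐ[ℚ] K) Φ))
          (b := IntermediateField.normalClosure ℚ F K) hx)
      apply step σ
      intro φ hφ
      rcases keyA σ h2 φ with h | h
      · exact h
      · exfalso
        have hin : σ • φ ∈ Φ := by
          rw [MulAction.mem_stabilizer_iff] at h1
          have h5 : σ • φ ∈ σ • Φ := Finset.smul_mem_smul_finset hφ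
          rwa [h1] at h5
        rw [smul_def, h] at hin
        exact ((hΦ φ).mp hφ) hin
    calc S = IntermediateField.fixedField (IntermediateField.fixingSubgroup S) :=
          (IsGalois.fixedField_fixingSubgroup _).symm
      _ = IntermediateField.fixedField (⊥ : Subgroup (K ≃ₐ[ℚ] K)) := by rw [hsub]
      _ = ⊤ := fixedField_bot
  refine ⟨?_, ?_⟩
  · rw [part1, part2]
  · rw [part2, hns]
end

section
/- Let $E$ be a Weyl CM field of degree $2g$, i.e., a CM field with $\mathrm{Gal}(E^s/\mathbb{Q}) \cong W_{2g}$ of order $2^g g!$. Fix the CM type $\Phi = \{\tau_1, \dots, \tau_g\}$ where $\tau_i(\alpha) = \alpha_i$ picks one root from each conjugate pair. Then the stabilizer of $\Phi$ in $\mathrm{Gal}(E^s/\mathbb{Q})$ has order exactly $g!$, and consequently the reflex field $E_\Phi$ has degree $[E_\Phi : \mathbb{Q}] = 2^g$. -/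
set_option maxHeartbeats 1600000

open Pointwise

/-- Let `E` be a Weyl CM field of degree `2g`: a CM field whose Galois closure
`K = E^s` has Galois group (isomorphic to the hyperoctahedral group `W_{2g}`, hence) of order
`2^g · g!`, with complex conjugation `c` a central involution of `K`.  Fix a CM type `Φ`
(choosing one embedding from each conjugate pair).  Then the stabilizer of `Φ` in
`Gal(E^s/ℚ)` has order exactly `g!`, and consequently the reflex field `E_Φ` (the fixed field
of this stabilizer) has degree `[E_Φ : ℚ] = 2^g`. -/
theorem weyl_cm_stabilizer_card_and_reflex_degree
    {K : Type*} [Field K] [NumberField K] [IsGalois ℚ K]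
    (E : IntermediateField ℚ K) (hns : IntermediateField.normalClosure ℚ E K = ⊤)
    (g : ℕ) (hg : 1 ≤ g) (hdeg : Module.finrank ℚ E = 2 * g)
    (c : K ≃ₐ[ℚ] K) (hc : ∀ x, c (c x) = x)
    (hcentral : ∀ σ : K ≃ₐ[ℚ] K, c * σ = σ * c)
    (hweyl : Nat.card (K ≃ₐ[ℚ] K) = 2 ^ g * Nat.factorial g)
    (Φ : Finset (E →ₐ[ℚ] K))
    (hΦ : ∀ φ : E →ₐ[ℚ] K, φ ∈ Φ ↔ c.toAlgHom.comp φ ∉ Φ) :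
    Nat.card (MulAction.stabilizer (K ≃ₐ[ℚ] K) Φ) = Nat.factorial g ∧
    Module.finrank ℚ (IntermediateField.fixedField (MulAction.stabilizer (K ≃ₐ[ℚ] K) Φ)) =
      2 ^ g := by
  classical
  have hΦ' : ∀ φ : E →ₐ[ℚ] K, φ ∈ Φ ↔ c • φ ∉ Φ := hΦ
  have hcc : ∀ φ : E →ₐ[ℚ] K, c • (c • φ) = φ := by
    intro φ; ext x; exact hc (φ x)
  have hpair : ∀ φ : E →ₐ[ℚ] K, φ ∉ Φ → c • φ ∈ Φ := by
    intro φ h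
    by_contra h'
    exact h ((hΦ' φ).mpr h')
  -- total number of embeddings
  have hcardA : Fintype.card (E →ₐ[ℚ] K) = 2 * g := by
    rw [AlgHom.card_of_splits ℚ E K ?_, hdeg]
    intro x
    have h1 : minpoly ℚ (algebraMap E K x) = minpoly ℚ x :=
      minpoly.algebraMap_eq (algebraMap E K).injective x
    rw [← h1]
    exact (IsGalois.to_normal (F := ℚ) (E := K)).splits _
  -- Φ has g elements
  have hΦcard : Φ.card = g := by
    have h1 : Φ.card = Φᶜ.card := by
      refine Finset.card_bij (fun φ _ => c • φ) ?_ ?_ ?_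
      · intro φ hφ
        exact Finset.mem_compl.mpr ((hΦ' φ).mp hφ)
      · intro φ _ ψ _ h
        have := congrArg (c • ·) h
        simpa [hcc] using this
      · intro ψ hψ
        exact ⟨c • ψ, hpair ψ (Finset.mem_compl.mp hψ), hcc ψ⟩
    have h2 : Φ.card + Φᶜ.card = 2 * g := by
      rw [Finset.card_add_card_compl, hcardA]
    omega
  -- every element of the orbit is a CM type
  have hP : ∀ S ∈ MulAction.orbit (K ≃ₐ[ℚ] K) Φ, ∀ φ : E →ₐ[ℚ] K, φ ∈ S ↔ c • φ ∉ S := by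
    rintro S ⟨σ, rfl⟩ φ
    rw [← Finset.inv_smul_mem_iff, ← Finset.inv_smul_mem_iff, hΦ' (σ⁻¹ • φ)]
    have hcom : σ⁻¹ • (c • φ) = c • (σ⁻¹ • φ) := by
      rw [smul_smul, smul_smul, ← hcentral σ⁻¹]
    rw [hcom]
  -- faithfulness of the action of the stabilizer on Φ
  have hfaith : ∀ σ : K ≃ₐ[ℚ] K, (∀ φ ∈ Φ, σ • φ = φ) → σ = 1 := by
    intro σ h
    have hall : ∀ ψ : E →ₐ[ℚ] K, σ • ψ = ψ := by
      intro ψ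
      by_cases hψ : ψ ∈ Φ
      · exact h ψ hψ
      · have h1 : σ • (c • ψ) = c • ψ := h _ (hpair ψ hψ)
        have h2 : c • (σ • (c • ψ)) = ψ := by rw [h1, hcc]
        rwa [smul_smul, hcentral σ, mul_smul, hcc] at h2
    have hfix : ∀ x : K, σ x = x := by
      have hle : (⊤ : IntermediateField ℚ K) ≤
          IntermediateField.fixedField (Subgroup.zpowers σ) := by
        rw [← hns, normalClosure_le_iff]
        rintro f x ⟨y, rfl⟩
        have hσx : σ • (f y) = f y := by
          have := AlgHom.congr_fun (hall f) y
          exact this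
        have hst : Subgroup.zpowers σ ≤ MulAction.stabilizer (K ≃ₐ[ℚ] K) (f y) :=
          Subgroup.zpowers_le.mpr hσx
        exact fun m => hst m.2
      intro x
      have hx := hle (IntermediateField.mem_top (x := x))
      exact hx ⟨σ, Subgroup.mem_zpowers σ⟩
    exact AlgEquiv.ext hfix
  -- the stabilizer has at most g! elements
  have hstab_le : Nat.card (MulAction.stabilizer (K ≃ₐ[ℚ] K) Φ) ≤ Nat.factorial g := by
    have hmapmem : ∀ (σ : MulAction.stabilizer (K ≃ₐ[ℚ] K) Φ) (φ : {x // x ∈ Φ}),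
        (σ : K ≃ₐ[ℚ] K) • (φ : E →ₐ[ℚ] K) ∈ Φ := by
      intro σ φ
      have h := Finset.smul_mem_smul_finset (a := (σ : K ≃ₐ[ℚ] K)) φ.2
      rwa [σ.2] at h
    let f : MulAction.stabilizer (K ≃ₐ[ℚ] K) Φ → ({x // x ∈ Φ} ↪ {x // x ∈ Φ}) :=
      fun σ => ⟨fun φ => ⟨(σ : K ≃ₐ[ℚ] K) • (φ : E →ₐ[ℚ] K), hmapmem σ φ⟩, by
        intro φ ψ h
        have h' := congrArg Subtype.val h
        exact Subtype.ext (smul_left_cancel _ h')⟩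
    have hfinj : Function.Injective f := by
      intro σ τ h
      have hστ : ∀ φ ∈ Φ, ((τ : K ≃ₐ[ℚ] K)⁻¹ * (σ : K ≃ₐ[ℚ] K)) • φ = φ := by
        intro φ hφ
        have h1 : (σ : K ≃ₐ[ℚ] K) • φ = (τ : K ≃ₐ[ℚ] K) • φ := by
          have := congrArg (fun e => (e.toFun ⟨φ, hφ⟩ : E →ₐ[ℚ] K)) h
          exact this
        rw [mul_smul, h1, inv_smul_smul]
      have h1 : (τ : K ≃ₐ[ℚ] K)⁻¹ * (σ : K ≃ₐ[ℚ] K) = 1 := hfaith _ hστ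
      have h2 : (σ : K ≃ₐ[ℚ] K) = (τ : K ≃ₐ[ℚ] K) := by
        have := congrArg (fun e => (τ : K ≃ₐ[ℚ] K) * e) h1
        simpa [mul_assoc] using this
      exact Subtype.ext h2
    calc Nat.card (MulAction.stabilizer (K ≃ₐ[ℚ] K) Φ)
        ≤ Nat.card ({x // x ∈ Φ} ↪ {x // x ∈ Φ}) := Nat.card_le_card_of_injective f hfinj
      _ = Nat.factorial g := by
          rw [Nat.card_eq_fintype_card, Fintype.card_embedding_eq, Fintype.card_coe, hΦcard,
            Nat.descFactorial_self]
  -- the orbit has at most 2^g elements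
  have horb_le : Nat.card (MulAction.orbit (K ≃ₐ[ℚ] K) Φ) ≤ 2 ^ g := by
    let f : MulAction.orbit (K ≃ₐ[ℚ] K) Φ → Finset {x // x ∈ Φ} :=
      fun S => Φ.attach.filter (fun φ => (φ : E →ₐ[ℚ] K) ∈ (S : Finset (E →ₐ[ℚ] K)))
    have hfinj : Function.Injective f := by
      intro S T h
      have hmem : ∀ φ : E →ₐ[ℚ] K, φ ∈ Φ →
          (φ ∈ (S : Finset (E →ₐ[ℚ] K)) ↔ φ ∈ (T : Finset (E →ₐ[ℚ] K))) := by
        intro φ hφ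
        constructor
        · intro hS
          have h1 : (⟨φ, hφ⟩ : {x // x ∈ Φ}) ∈ f S := by
            simp [f, hS]
          rw [h] at h1
          simpa [f] using h1
        · intro hT
          have h1 : (⟨φ, hφ⟩ : {x // x ∈ Φ}) ∈ f T := by
            simp [f, hT]
          rw [← h] at h1
          simpa [f] using h1
      apply Subtype.ext
      ext φ
      by_cases hφ : φ ∈ Φ
      · exact hmem φ hφ
      · have hcφ : c • φ ∈ Φ := hpair φ hφ
        have hS := hP S S.2 φ
        have hT := hP T T.2 φ
        rw [hS, hT, not_iff_not]
        exact hmem _ hcφ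
    calc Nat.card (MulAction.orbit (K ≃ₐ[ℚ] K) Φ)
        ≤ Nat.card (Finset {x // x ∈ Φ}) := Nat.card_le_card_of_injective f hfinj
      _ = 2 ^ g := by
          rw [Nat.card_eq_fintype_card, Fintype.card_finset, Fintype.card_coe, hΦcard]
  -- orbit-stabilizer
  have hos : Nat.card (MulAction.orbit (K ≃ₐ[ℚ] K) Φ) *
      Nat.card (MulAction.stabilizer (K ≃ₐ[ℚ] K) Φ) = 2 ^ g * Nat.factorial g := by
    rw [← hweyl, ← Nat.card_prod]
    exact Nat.card_congr (MulAction.orbitProdStabilizerEquivGroup (K ≃ₐ[ℚ] K) Φ)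
  haveI : Nonempty (MulAction.orbit (K ≃ₐ[ℚ] K) Φ) := ⟨⟨Φ, MulAction.mem_orbit_self Φ⟩⟩
  have hspos : 0 < Nat.card (MulAction.stabilizer (K ≃ₐ[ℚ] K) Φ) := Nat.card_pos
  have hopos : 0 < Nat.card (MulAction.orbit (K ≃ₐ[ℚ] K) Φ) := Nat.card_pos
  have hstab : Nat.card (MulAction.stabilizer (K ≃ₐ[ℚ] K) Φ) = Nat.factorial g := by
    have h1 : 2 ^ g * Nat.factorial g ≤
        2 ^ g * Nat.card (MulAction.stabilizer (K ≃ₐ[ℚ] K) Φ) := by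
      calc 2 ^ g * Nat.factorial g
          = Nat.card (MulAction.orbit (K ≃ₐ[ℚ] K) Φ) *
            Nat.card (MulAction.stabilizer (K ≃ₐ[ℚ] K) Φ) := hos.symm
        _ ≤ 2 ^ g * Nat.card (MulAction.stabilizer (K ≃ₐ[ℚ] K) Φ) :=
            Nat.mul_le_mul_right _ horb_le
    have h2 : Nat.factorial g ≤ Nat.card (MulAction.stabilizer (K ≃ₐ[ℚ] K) Φ) :=
      Nat.le_of_mul_le_mul_left h1 (Nat.pow_pos (n := g) two_pos)
    omega
  refine ⟨hstab, ?_⟩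
  -- degree of the reflex field
  have hfr1 : Module.finrank
      (IntermediateField.fixedField (MulAction.stabilizer (K ≃ₐ[ℚ] K) Φ)) K =
      Nat.factorial g := by
    rw [IntermediateField.finrank_fixedField_eq_card, hstab]
  have hfr2 : Module.finrank ℚ
        (IntermediateField.fixedField (MulAction.stabilizer (K ≃ₐ[ℚ] K) Φ)) *
      Module.finrank
        (IntermediateField.fixedField (MulAction.stabilizer (K ≃ₐ[ℚ] K) Φ)) K =
      Module.finrank ℚ K :=
    Module.finrank_mul_finrank ℚ _ K
  have hfr3 : Module.finrank ℚ K = 2 ^ g * Nat.factorial g := by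
    rw [← IsGalois.card_aut_eq_finrank, hweyl]
  rw [hfr1, hfr3] at hfr2
  have := Nat.factorial_pos g
  exact Nat.eq_of_mul_eq_mul_right this hfr2
end
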